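/- In the $\xi$ algorithm, each edge is added between two nodes that are in different connected components of the current graph (no edge ever creates a cycle), because every edge joins two unprocessed nodes and no path exists between distinct unprocessed nodes at any stage. -/

import Mathlib

/-- Index of the previous position on a ring of `n` positions. -/
def prevIdx (n p : ℕ) : ℕ := (p + n - 1) % n

/-- A position `p` of the ring `r` of (label, counter) pairs qualifies for processing:
its counter is `0` and the counter of the previous unprocessed node is positive. -/
def qual (r : List (ℕ × ℕ)) (p : ℕ) : Bool :=
  ((r.getD p (0, 0)).2 == 0) && ((r.getD (prevIdx r.length p) (0, 0)).2 != 0)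

/-- One simultaneous step of the ξ algorithm: returns the list of (parent, child) edges
added in this step, and the new ring (qualifying nodes removed, their predecessors'
counters decremented). -/
def xiStep (r : List (ℕ × ℕ)) : List (ℕ × ℕ) × List (ℕ × ℕ) :=
  ((List.range r.length).filterMap fun p =>
      if qual r p then
        some ((r.getD (prevIdx r.length p) (0, 0)).1, (r.getD p (0, 0)).1)
      else none,
   (List.range r.length).filterMap fun p =>
      if qual r p then none
      else some ((r.getD p (0, 0)).1,
        if qual r ((p + 1) % r.length) then (r.getD p (0, 0)).2 - 1
        else (r.getD p (0, 0)).2))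

/-- Iterate the ξ algorithm with the given fuel, stopping when no pair qualifies.
Returns the accumulated (parent, child) edges and the final ring. -/
def xiAux : ℕ → List (ℕ × ℕ) → List (ℕ × ℕ) × List (ℕ × ℕ)
  | 0, r => ([], r)
  | t + 1, r =>
    let st := xiStep r
    if st.1 = [] then ([], r)
    else
      let rest := xiAux t st.2
      (st.1 ++ rest.1, rest.2)

/-- Run the ξ algorithm on a ring of (label, counter) pairs. -/
def xiRun (r : List (ℕ × ℕ)) : List (ℕ × ℕ) × List (ℕ × ℕ) := xiAux r.length r

/-- The ξ construction applied to a sequence of offspring counts, the node labels being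
the positions `0, …, n-1` in the sequence. -/
def xi (s : List ℕ) : List (ℕ × ℕ) × List (ℕ × ℕ) := xiRun (s.zipIdx.map Prod.swap)

/-- The ring of unprocessed nodes after `t` iterations of the ξ algorithm. -/
def ringIter (r : List (ℕ × ℕ)) : ℕ → List (ℕ × ℕ)
  | 0 => r
  | t + 1 => (xiStep (ringIter r t)).2

/-- The edges added during the first `t` iterations of the ξ algorithm. -/
def edgesIter (r : List (ℕ × ℕ)) : ℕ → List (ℕ × ℕ)
  | 0 => []
  | t + 1 => edgesIter r t ++ (xiStep (ringIter r t)).1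


-- list helpers
lemma filterMap_ite_none {α β : Type*} (c : α → Bool) (f : α → β) :
    ∀ l : List α, (l.filterMap fun p => if c p then none else some (f p))
      = (l.filter fun p => !c p).map f := by
  intro l
  induction l with
  | nil => simp
  | cons a l ih =>
    by_cases h : c a = true <;>
      simp [List.filterMap_cons, List.filter_cons, h, ih]

lemma range_map_getD {α : Type*} (l : List α) (d : α) :
    (List.range l.length).map (fun p => l.getD p d) = l := by
  apply List.ext_getElem
  · simp
  · intro i h1 h2
    simp [List.getD_eq_getElem _ _ h2, List.getElem?_eq_getElem h2]

lemma xiStep_snd_labels (r : List (ℕ × ℕ)) :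
    ((xiStep r).2).map Prod.fst
      = ((List.range r.length).filter fun p => !qual r p).map
          (fun p => (r.getD p (0,0)).1) := by
  show (List.filterMap _ _).map _ = _
  rw [List.map_filterMap, ← filterMap_ite_none]
  congr 1
  funext p
  by_cases h : qual r p = true <;> simp [h]

lemma range_map_label (r : List (ℕ × ℕ)) :
    (List.range r.length).map (fun p => (r.getD p (0,0)).1) = r.map Prod.fst := by
  conv_rhs => rw [← range_map_getD r (0,0)]
  rw [List.map_map]
  rfl

lemma xiStep_snd_sublist (r : List (ℕ × ℕ)) :
    List.Sublist (((xiStep r).2).map Prod.fst) (r.map Prod.fst) := by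
  rw [xiStep_snd_labels, ← range_map_label r]
  exact List.filter_sublist.map _

lemma mem_xiStep_fst {r : List (ℕ × ℕ)} {e : ℕ × ℕ} :
    e ∈ (xiStep r).1 ↔ ∃ p, p < r.length ∧ qual r p = true ∧
      e = ((r.getD (prevIdx r.length p) (0,0)).1, (r.getD p (0,0)).1) := by
  show e ∈ (List.range r.length).filterMap _ ↔ _
  simp only [List.mem_filterMap, List.mem_range]
  constructor
  · rintro ⟨p, hp, he⟩
    by_cases h : qual r p = true
    · simp only [h, if_true, Option.some.injEq] at he
      exact ⟨p, hp, h, he.symm⟩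
    · simp [h] at he
  · rintro ⟨p, hp, h, rfl⟩
    exact ⟨p, hp, by simp [h]⟩

lemma label_inj {r : List (ℕ × ℕ)} (hnd : (r.map Prod.fst).Nodup)
    {p q : ℕ} (hp : p < r.length) (hq : q < r.length)
    (h : (r.getD p (0,0)).1 = (r.getD q (0,0)).1) : p = q := by
  have hp' : p < (r.map Prod.fst).length := by simpa using hp
  have hq' : q < (r.map Prod.fst).length := by simpa using hq
  have h2 : (r.map Prod.fst)[p] = (r.map Prod.fst)[q] := by
    rw [List.getD_eq_getElem _ _ hp, List.getD_eq_getElem _ _ hq] at h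
    simpa [List.getElem_map] using h
  exact (List.Nodup.getElem_inj_iff hnd).1 h2

lemma label_mem {r : List (ℕ × ℕ)} {p : ℕ} (hp : p < r.length) :
    (r.getD p (0,0)).1 ∈ r.map Prod.fst := by
  rw [List.getD_eq_getElem _ _ hp]
  exact List.mem_map.2 ⟨r[p], List.getElem_mem _, rfl⟩

lemma prevIdx_lt {n p : ℕ} (hp : p < n) : prevIdx n p < n :=
  Nat.mod_lt _ (Nat.lt_of_le_of_lt (Nat.zero_le _) hp)

lemma not_qual_prev {r : List (ℕ × ℕ)} {p : ℕ} (hq : qual r p = true) :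
    qual r (prevIdx r.length p) = false := by
  simp only [qual, Bool.and_eq_true, beq_iff_eq, bne_iff_ne, ne_eq] at hq
  simp only [qual, Bool.and_eq_false_iff]
  left
  simpa using hq.2

lemma child_not_mem_next {r : List (ℕ × ℕ)} (hnd : (r.map Prod.fst).Nodup)
    {p : ℕ} (hp : p < r.length) (hq : qual r p = true) :
    (r.getD p (0,0)).1 ∉ ((xiStep r).2).map Prod.fst := by
  rw [xiStep_snd_labels]
  intro hmem
  obtain ⟨q, hq', heq⟩ := List.mem_map.1 hmem
  obtain ⟨hqr, hnq⟩ := List.mem_filter.1 hq'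
  have hqlt : q < r.length := List.mem_range.1 hqr
  have : q = p := label_inj hnd hqlt hp heq
  subst this
  rw [hq] at hnq
  simp at hnq

lemma parent_mem_next {r : List (ℕ × ℕ)} {p : ℕ} (hp : p < r.length)
    (hq : qual r p = true) :
    (r.getD (prevIdx r.length p) (0,0)).1 ∈ ((xiStep r).2).map Prod.fst := by
  rw [xiStep_snd_labels]
  refine List.mem_map.2 ⟨prevIdx r.length p, List.mem_filter.2
    ⟨List.mem_range.2 (prevIdx_lt hp), ?_⟩, rfl⟩
  rw [not_qual_prev hq]
  rfl

lemma ring_labels_mono (r : List (ℕ × ℕ)) {u u' : ℕ} (h : u ≤ u') :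
    ∀ v, v ∈ (ringIter r u').map Prod.fst → v ∈ (ringIter r u).map Prod.fst := by
  induction u', h using Nat.le_induction with
  | base => exact fun v hv => hv
  | succ u' h ih =>
    intro v hv
    exact ih v ((xiStep_snd_sublist (ringIter r u')).subset hv)

lemma ring_nodup (s : List ℕ) (t : ℕ) : ((ringIter (s.zipIdx.map Prod.swap) t).map Prod.fst).Nodup := by
  have h0 : ((s.zipIdx.map Prod.swap).map Prod.fst).Nodup := by
    rw [List.map_map]
    change (List.map Prod.snd s.zipIdx).Nodup
    rw [List.zipIdx_map_snd]
    exact List.nodup_range' ..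
  induction t with
  | zero => exact h0
  | succ t ih => exact (xiStep_snd_sublist (ringIter (s.zipIdx.map Prod.swap) t)).nodup ih

lemma mem_edgesIter {r : List (ℕ × ℕ)} {e : ℕ × ℕ} {t : ℕ} :
    e ∈ edgesIter r t ↔ ∃ u, u < t ∧ e ∈ (xiStep (ringIter r u)).1 := by
  induction t with
  | zero => simp [edgesIter]
  | succ t ih =>
    show e ∈ _ ++ _ ↔ _
    rw [List.mem_append, ih]
    constructor
    · rintro (⟨u, hu, hm⟩ | hm)
      · exact ⟨u, Nat.lt_succ_of_lt hu, hm⟩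
      · exact ⟨t, Nat.lt_succ_self t, hm⟩
    · rintro ⟨u, hu, hm⟩
      rcases Nat.lt_succ_iff_lt_or_eq.1 hu with h | rfl
      · exact Or.inl ⟨u, h, hm⟩
      · exact Or.inr hm

lemma step_edge_facts (s : List ℕ) {u : ℕ} {a b : ℕ}
    (h : (a, b) ∈ (xiStep (ringIter (s.zipIdx.map Prod.swap) u)).1) :
    b ∈ (ringIter (s.zipIdx.map Prod.swap) u).map Prod.fst ∧
    b ∉ (ringIter (s.zipIdx.map Prod.swap) (u+1)).map Prod.fst ∧
    a ∈ (ringIter (s.zipIdx.map Prod.swap) (u+1)).map Prod.fst := by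
  obtain ⟨p, hp, hq, he⟩ := mem_xiStep_fst.1 h
  have hab : a = ((ringIter (s.zipIdx.map Prod.swap) u).getD (prevIdx (ringIter (s.zipIdx.map Prod.swap) u).length p) (0,0)).1 ∧
      b = ((ringIter (s.zipIdx.map Prod.swap) u).getD p (0,0)).1 := ⟨congrArg Prod.fst he, congrArg Prod.snd he⟩
  obtain ⟨ha, hb⟩ := hab
  subst ha; subst hb
  refine ⟨label_mem hp, ?_, ?_⟩
  · exact child_not_mem_next (ring_nodup s u) hp hq
  · exact parent_mem_next hp hq

lemma parent_unique (s : List ℕ) {t a a' b : ℕ}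
    (h : (a, b) ∈ edgesIter (s.zipIdx.map Prod.swap) t) (h' : (a', b) ∈ edgesIter (s.zipIdx.map Prod.swap) t) : a = a' := by
  obtain ⟨u, hu, hm⟩ := mem_edgesIter.1 h
  obtain ⟨u', hu', hm'⟩ := mem_edgesIter.1 h'
  have key : ∀ {u u' : ℕ} {a a' : ℕ}, u < u' →
      (a, b) ∈ (xiStep (ringIter (s.zipIdx.map Prod.swap) u)).1 →
      (a', b) ∈ (xiStep (ringIter (s.zipIdx.map Prod.swap) u')).1 → False := by
    intro u u' a a' hlt hm hm'
    have h1 := (step_edge_facts s hm).2.1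
    have h2 := (step_edge_facts s hm').1
    exact h1 (ring_labels_mono (s.zipIdx.map Prod.swap) hlt b h2)
  rcases lt_trichotomy u u' with hlt | rfl | hlt
  · exact (key hlt hm hm').elim
  · -- same step
    obtain ⟨p, hp, hq, he⟩ := mem_xiStep_fst.1 hm
    obtain ⟨p', hp', hq', he'⟩ := mem_xiStep_fst.1 hm'
    have hb : ((ringIter (s.zipIdx.map Prod.swap) u).getD p (0,0)).1 = ((ringIter (s.zipIdx.map Prod.swap) u).getD p' (0,0)).1 := by
      have := congrArg Prod.snd he
      have := congrArg Prod.snd he'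
      simp_all
    have hpp : p = p' := label_inj (ring_nodup s u) hp hp' hb
    subst hpp
    have := congrArg Prod.fst he
    have := congrArg Prod.fst he'
    simp_all
  · exact ((key hlt hm' hm).elim : a = a')

lemma child_never_again (s : List ℕ) {u t b x : ℕ} (hu : u < t)
    (hm : (x, b) ∈ (xiStep (ringIter (s.zipIdx.map Prod.swap) u)).1) :
    b ∉ (ringIter (s.zipIdx.map Prod.swap) t).map Prod.fst := by
  intro hb
  exact (step_edge_facts s hm).2.1 (ring_labels_mono (s.zipIdx.map Prod.swap) hu b hb)

noncomputable def gFun (s : List ℕ) (t : ℕ) (v : ℕ) : ℕ :=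
  ((List.range (t+1)).filter fun u => decide (v ∈ (ringIter (s.zipIdx.map Prod.swap) u).map Prod.fst)).length

lemma g_child_le {s : List ℕ} {u t b : ℕ} (hu : u < t)
    (hb : b ∉ (ringIter (s.zipIdx.map Prod.swap) (u+1)).map Prod.fst) :
    gFun s t b ≤ u + 1 := by
  unfold gFun
  have hsplit : t + 1 = (u+1) + (t - u) := by omega
  rw [hsplit, List.range_add, List.filter_append, List.length_append]
  have h2 : ((List.map (fun x => (u+1) + x) (List.range (t-u))).filter
      fun w => decide (b ∈ (ringIter (s.zipIdx.map Prod.swap) w).map Prod.fst)).length = 0 := by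
    rw [List.length_eq_zero_iff, List.filter_eq_nil_iff]
    intro w hw
    obtain ⟨x, _, rfl⟩ := List.mem_map.1 hw
    intro hmem
    exact hb (ring_labels_mono (s.zipIdx.map Prod.swap) (Nat.le_add_right _ _) b (of_decide_eq_true hmem))
  rw [h2]
  simpa using List.length_filter_le _ (List.range (u+1))

lemma g_parent_ge {s : List ℕ} {u t a : ℕ} (hu : u < t)
    (ha : a ∈ (ringIter (s.zipIdx.map Prod.swap) (u+1)).map Prod.fst) :
    u + 2 ≤ gFun s t a := by
  unfold gFun
  have hsub : List.Sublist
      ((List.range (u+2)).filter fun w => decide (a ∈ (ringIter (s.zipIdx.map Prod.swap) w).map Prod.fst))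
      ((List.range (t+1)).filter fun w => decide (a ∈ (ringIter (s.zipIdx.map Prod.swap) w).map Prod.fst)) :=
    (List.range_sublist.2 (by omega)).filter _
  have hself : ((List.range (u+2)).filter
      fun w => decide (a ∈ (ringIter (s.zipIdx.map Prod.swap) w).map Prod.fst)) = List.range (u+2) := by
    rw [List.filter_eq_self]
    intro w hw
    have hwle : w ≤ u + 1 := by simpa [Nat.lt_succ_iff] using List.mem_range.1 hw
    simp only [decide_eq_true_eq]
    exact ring_labels_mono (s.zipIdx.map Prod.swap) hwle a ha
  have := hsub.length_le
  rw [hself] at this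
  simpa using this

open SimpleGraph Walk in
lemma fromRel_forest {V : Type*} (R : V → V → Prop) (g : V → ℕ)
    (hg : ∀ a b, R a b → g b < g a)
    (huniq : ∀ ⦃x y b : V⦄, R x b → R y b → x = y) :
    (SimpleGraph.fromRel R).IsAcyclic ∧
    ∀ i j : V, (∀ x, ¬ R x i) → (∀ x, ¬ R x j) → i ≠ j →
      ¬ (SimpleGraph.fromRel R).Reachable i j := by
  classical
  set G := SimpleGraph.fromRel R with hG
  have key : ∀ {u w : V}, G.Adj u w → g u ≤ g w → R w u := by
    intro u w h hle
    rw [hG, SimpleGraph.fromRel_adj] at h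
    rcases h.2 with h' | h'
    · exact absurd (lt_of_lt_of_le (hg _ _ h') hle) (lt_irrefl _)
    · exact h'
  have argmin_ex : ∀ {a b : V} (p : G.Walk a b),
      ∃ u ∈ p.support, ∀ w ∈ p.support, g u ≤ g w := by
    intro a b p
    rcases hargmin : p.support.argmin g with _ | m
    · rw [List.argmin_eq_none] at hargmin
      exact absurd hargmin p.support_ne_nil
    · have hm : m ∈ p.support.argmin g := by rw [hargmin]; rfl
      exact ⟨m, List.argmin_mem hm, fun w hw => List.le_of_mem_argmin hw hm⟩
  constructor
  · -- acyclic
    have main : ∀ (u : V) (c' : G.Walk u u), c'.IsCycle →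
        (∀ w ∈ c'.support, g u ≤ g w) → False := by
      intro u c' hc' hmin'
      cases c' with
      | nil => exact hc'.ne_nil rfl
      | cons h p =>
        rename_i w1
        have hw1 : w1 ∈ (Walk.cons h p).support := by
          rw [Walk.support_cons]
          exact List.mem_cons_of_mem _ p.start_mem_support
        have hR1 : R w1 u := key h (hmin' w1 hw1)
        have hd : ¬ (Walk.cons h p).reverse.Nil := by
          rw [Walk.not_nil_iff_lt_length, Walk.length_reverse]
          simp
        obtain ⟨w2, h2, q, hdq⟩ := Walk.not_nil_iff.1 hd
        have hw2 : w2 ∈ (Walk.cons h p).support := by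
          have : w2 ∈ (Walk.cons h p).reverse.support := by
            rw [hdq, Walk.support_cons]
            exact List.mem_cons_of_mem _ q.start_mem_support
          rwa [Walk.support_reverse, List.mem_reverse] at this
        have hR2 : R w2 u := key h2 (hmin' w2 hw2)
        have hww : w1 = w2 := huniq hR1 hR2
        subst hww
        have he : (Walk.cons h p).edges.reverse = s(u, w1) :: q.edges := by
          rw [← Walk.edges_reverse, hdq, Walk.edges_cons]
        have he2 : (Walk.cons h p).edges = q.edges.reverse ++ [s(u, w1)] := by
          rw [← List.reverse_reverse (Walk.cons h p).edges, he]
          simp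
        have hnd : (s(u, w1) :: p.edges).Nodup := by
          rw [← Walk.edges_cons]
          exact hc'.edges_nodup
        have hlen : 3 ≤ p.length + 1 := by
          have := hc'.three_le_length
          simpa using this
        rw [Walk.edges_cons] at he2
        cases hqe : q.edges.reverse with
        | nil =>
          rw [hqe, List.nil_append] at he2
          have hlen2 : (s(u, w1) :: p.edges).length = 1 := by rw [he2]; rfl
          have h0 : p.edges.length = 0 := by simpa using hlen2
          rw [Walk.length_edges] at h0
          omega
        | cons x xs =>
          rw [hqe, List.cons_append] at he2
          have hx : s(u, w1) = x := (List.cons_eq_cons.1 he2).1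
          have hpe : p.edges = xs ++ [s(u, w1)] := (List.cons_eq_cons.1 he2).2
          have : s(u, w1) ∈ p.edges := by
            rw [hpe]
            simp
          exact (List.nodup_cons.1 hnd).1 this
    intro v c hc
    obtain ⟨u, hu, hmin⟩ := argmin_ex c
    exact main u (c.rotate u hu) (hc.rotate hu) (by
      intro w hw
      apply hmin
      have hperm := c.support_rotate u hu
      rcases List.mem_cons.1 ((c.rotate u hu).support_eq_cons ▸ hw) with rfl | hw'
      · exact hu
      · exact List.mem_of_mem_tail (hperm.mem_iff.1 hw'))
  · -- no path between parentless vertices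
    intro i j hi hj hij hr
    obtain ⟨w⟩ := hr
    let P := w.toPath
    obtain ⟨p, hp⟩ : ∃ p : G.Walk i j, p.IsPath := ⟨P.1, P.2⟩
    obtain ⟨u, hu, hmin⟩ := argmin_ex p
    -- u ≠ i
    have hpn : ¬ p.Nil := Walk.not_nil_of_ne hij
    obtain ⟨w1, h1, q1, hq1⟩ := Walk.not_nil_iff.1 hpn
    have hRi : R i w1 := by
      have := (SimpleGraph.fromRel_adj R i w1).1 h1
      rcases this.2 with h' | h'
      · exact h'
      · exact absurd h' (hi w1)
    have hui : u ≠ i := by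
      intro huu
      subst huu
      have hw1 : w1 ∈ p.support := by
        rw [hq1, Walk.support_cons]
        exact List.mem_cons_of_mem _ q1.start_mem_support
      exact absurd (lt_of_lt_of_le (hg _ _ hRi) (hmin w1 hw1)) (lt_irrefl _)
    -- u ≠ j
    have hpn' : ¬ p.reverse.Nil := Walk.not_nil_of_ne (Ne.symm hij)
    obtain ⟨w2, h2, q2, hq2⟩ := Walk.not_nil_iff.1 hpn'
    have hRj : R j w2 := by
      have := (SimpleGraph.fromRel_adj R j w2).1 h2
      rcases this.2 with h' | h'
      · exact h'
      · exact absurd h' (hj w2)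
    have huj : u ≠ j := by
      intro huu
      subst huu
      have hw2 : w2 ∈ p.support := by
        have : w2 ∈ p.reverse.support := by
          rw [hq2, Walk.support_cons]
          exact List.mem_cons_of_mem _ q2.start_mem_support
        rwa [Walk.support_reverse, List.mem_reverse] at this
      exact absurd (lt_of_lt_of_le (hg _ _ hRj) (hmin w2 hw2)) (lt_irrefl _)
    -- split the path at u
    set t1 := p.takeUntil u hu with ht1
    set t2 := p.dropUntil u hu with ht2
    have hspec : t1.append t2 = p := p.take_spec hu
    have hsupp : p.support = t1.support ++ t2.support.tail := by
      rw [← hspec, Walk.support_append]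
    have hnd : (t1.support ++ t2.support.tail).Nodup := by
      rw [← hsupp]; exact hp.support_nodup
    have hdisj := List.disjoint_of_nodup_append hnd
    -- x : neighbor of u in t1
    have ht1n : ¬ t1.reverse.Nil := Walk.not_nil_of_ne hui
    obtain ⟨x, hx, qx, hqx⟩ := Walk.not_nil_iff.1 ht1n
    have hxt1 : x ∈ t1.support := by
      have : x ∈ t1.reverse.support := by
        rw [hqx, Walk.support_cons]
        exact List.mem_cons_of_mem _ qx.start_mem_support
      rwa [Walk.support_reverse, List.mem_reverse] at this
    have hxp : x ∈ p.support := p.support_takeUntil_subset hu hxt1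
    have hRx : R x u := key hx (hmin x hxp)
    -- y : neighbor of u in t2
    have ht2n : ¬ t2.Nil := Walk.not_nil_of_ne huj
    obtain ⟨y, hy, qy, hqy⟩ := Walk.not_nil_iff.1 ht2n
    have hyt2 : y ∈ t2.support.tail := by
      rw [hqy, Walk.support_cons]
      exact qy.start_mem_support
    have hyp : y ∈ p.support := by
      rw [hsupp]
      exact List.mem_append_right _ hyt2
    have hRy : R y u := key hy (hmin y hyp)
    have hxy : x = y := huniq hRx hRy
    subst hxy
    exact hdisj hxt1 hyt2

open Classical

/-- In the ξ algorithm no edge ever creates a cycle: at every stage the graph built from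
the edges added so far is acyclic, because no path exists between distinct unprocessed
nodes at any stage. -/
theorem xi_no_cycle (s : List ℕ) (k : ℕ) (hk : k ≤ s.length)
    (hsum : s.sum = s.length - k) :
    ∀ t : ℕ,
      (SimpleGraph.fromRel fun i j : Fin s.length =>
          ((i : ℕ), (j : ℕ)) ∈ edgesIter (s.zipIdx.map Prod.swap) t).IsAcyclic ∧
      ∀ i j : Fin s.length,
        (i : ℕ) ∈ (ringIter (s.zipIdx.map Prod.swap) t).map Prod.fst →
        (j : ℕ) ∈ (ringIter (s.zipIdx.map Prod.swap) t).map Prod.fst → i ≠ j →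
        ¬ (SimpleGraph.fromRel fun a b : Fin s.length =>
            ((a : ℕ), (b : ℕ)) ∈ edgesIter (s.zipIdx.map Prod.swap) t).Reachable i j := by
  intro t
  have hgN : ∀ a b : ℕ, (a, b) ∈ edgesIter (s.zipIdx.map Prod.swap) t → gFun s t b < gFun s t a := by
    intro a b h
    obtain ⟨u, hu, hm⟩ := mem_edgesIter.1 h
    obtain ⟨_, hb, ha⟩ := step_edge_facts s hm
    have h1 := g_child_le hu hb
    have h2 := g_parent_ge hu ha
    omega
  have main := fromRel_forest
      (fun i j : Fin s.length => ((i : ℕ), (j : ℕ)) ∈ edgesIter (s.zipIdx.map Prod.swap) t)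
      (fun v : Fin s.length => gFun s t (v : ℕ))
      (fun a b h => hgN _ _ h)
      (fun x y b hx hy => Fin.val_injective (parent_unique s hx hy))
  refine ⟨main.1, ?_⟩
  intro i j hi hj hij
  refine main.2 i j ?_ ?_ hij
  · intro x hx
    obtain ⟨u, hu, hm⟩ := mem_edgesIter.1 hx
    exact child_never_again s hu hm hi
  · intro x hx
    obtain ⟨u, hu, hm⟩ := mem_edgesIter.1 hx
    exact child_never_again s hu hm hj
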